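/- Let K : ℝ × (ℝ^m × ℝ^m) → ℝ be a compactly supported C^2 time-dependent Hamiltonian on T*ℝ^m = ℝ^m × ℝ^m with Hamiltonian flow ψ^t, and write ψ^t(q,p) = (Q(t,q,p), P(t,q,p)). Define F(t, x) := ∫_0^t [ ⟨P(s,x), ∂_s Q(s,x)⟩ − K(s, ψ^s(x)) ] ds for x = (q,p). Then for every t, the function x ↦ F(t,x) is differentiable and its differential equals (ψ^t)*λ − λ, where λ = Σ_i p_i dq_i is the Liouville form: that is, for all x = (q,p) and every tangent vector v = (v_q, v_p) ∈ ℝ^m × ℝ^m, D_x F(t,x)(v) = ⟨P(t,x), D_x Q(t,x)(v)⟩ − ⟨p, v_q⟩. -/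

import Mathlib

open Set Function MeasureTheory

set_option maxHeartbeats 1600000
noncomputable section

/-- The cotangent space `T^*ℝ^m = ℝ^m × ℝ^m` with coordinates `(q, p)`. -/
abbrev Phase (m : ℕ) := (Fin m → ℝ) × (Fin m → ℝ)

/-- The Hamiltonian vector field `X_K = (∂K/∂p, −∂K/∂q)` of `K : Phase m → ℝ`. -/
def sympGrad (m : ℕ) (K : Phase m → ℝ) (z : Phase m) : Phase m :=
  (fun i => fderiv ℝ K z (0, Pi.single i 1),
   fun i => -fderiv ℝ K z (Pi.single i 1, 0))

/-- `ψ` is the Hamiltonian flow of the time-dependent Hamiltonian `K`: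
`ψ^0 = id` and `(d/dt) ψ^t(z) = X_{K_t}(ψ^t(z))`. -/
def IsHamFlow (m : ℕ) (K : ℝ → Phase m → ℝ) (ψ : ℝ → Phase m → Phase m) : Prop :=
  (∀ z, ψ 0 z = z) ∧
  ∀ (z : Phase m) (t : ℝ), HasDerivAt (fun s => ψ s z) (sympGrad m (K t) (ψ t z)) t

/-- A time-dependent function on phase space is compactly supported if all its
time slices are supported in one fixed compact set. -/
def CompactlySupported (m : ℕ) (K : ℝ → Phase m → ℝ) : Prop :=
  ∃ C : Set (Phase m), IsCompact C ∧ ∀ t, Function.support (K t) ⊆ C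

/-- The classical action `F(t,x) = ∫_0^t [⟨P(s,x), ∂_s Q(s,x)⟩ − K(s, ψ^s(x))] ds`,
where `ψ^s(x) = (Q(s,x), P(s,x))`. -/
def actF (m : ℕ) (K : ℝ → Phase m → ℝ) (ψ : ℝ → Phase m → Phase m)
    (t : ℝ) (x : Phase m) : ℝ :=
  ∫ s in (0:ℝ)..t,
    ((∑ i, (ψ s x).2 i * deriv (fun u => (ψ u x).1 i) s) - K s (ψ s x))

/-! ### Auxiliary material -/

namespace ActionAux

/-- Derivative of a partial map `z ↦ f (s, z)`. -/
theorem slice_hasFDerivAt {G F : Type*} [NormedAddCommGroup G] [NormedSpace ℝ G]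
    [NormedAddCommGroup F] [NormedSpace ℝ F]
    {f : ℝ × G → F} {s : ℝ} {z : G} (hf : DifferentiableAt ℝ f (s, z)) :
    HasFDerivAt (fun w => f (s, w))
      ((fderiv ℝ f (s, z)).comp (ContinuousLinearMap.inr ℝ ℝ G)) z :=
  hf.hasFDerivAt.comp z (hasFDerivAt_prodMk_right s z)

/-- Gluing of continuous functions on adjacent intervals. -/
theorem continuousOn_if_le {F : Type*} [TopologicalSpace F] {f g : ℝ → F} {a b c : ℝ}
    (hf : ContinuousOn f (Icc a b)) (hg : ContinuousOn g (Icc b c))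
    (hab : a ≤ b) (hbc : b ≤ c) (hfg : f b = g b) :
    ContinuousOn (fun x => if x ≤ b then f x else g x) (Icc a c) := by
  have hcup : Icc a b ∪ Icc b c = Icc a c := Icc_union_Icc_eq_Icc hab hbc
  intro σ hσ
  rw [← hcup] at hσ ⊢
  have h1 : ContinuousWithinAt (fun x => if x ≤ b then f x else g x) (Icc a b) σ := by
    by_cases hmem : σ ∈ Icc a b
    · refine (hf σ hmem).congr (fun y hy => ?_) ?_
      · rw [if_pos hy.2]
      · rw [if_pos hmem.2]
    · exact continuousWithinAt_of_notMem_closure (by rwa [isClosed_Icc.closure_eq])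
  have h2 : ContinuousWithinAt (fun x => if x ≤ b then f x else g x) (Icc b c) σ := by
    by_cases hmem : σ ∈ Icc b c
    · refine (hg σ hmem).congr (fun y hy => ?_) ?_
      · by_cases hyb : y ≤ b
        · have : y = b := le_antisymm hyb hy.1
          rw [if_pos hyb, this, hfg]
        · rw [if_neg hyb]
      · by_cases hyb : σ ≤ b
        · have : σ = b := le_antisymm hyb hmem.1
          rw [if_pos hyb, this, hfg]
        · rw [if_neg hyb]
    · exact continuousWithinAt_of_notMem_closure (by rwa [isClosed_Icc.closure_eq])
  exact h1.union h2

/-- Global existence for an ODE with a linear growth/Lipschitz bound, by gluing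
Picard-Lindelöf solutions. -/
theorem glue_ode {F : Type*} [NormedAddCommGroup F] [NormedSpace ℝ F] [CompleteSpace F]
    (B : ℝ → F → F) (T L : ℝ) (hL : 0 ≤ L)
    (hBc : Continuous fun p : ℝ × F => B p.1 p.2)
    (hlip : ∀ s ∈ Icc (0:ℝ) T, ∀ u v : F, ‖B s u - B s v‖ ≤ L * ‖u - v‖)
    (hgrow : ∀ s ∈ Icc (0:ℝ) T, ∀ u : F, ‖B s u‖ ≤ L * (‖u‖ + 1))
    (hT : 0 ≤ T) (w₀ : F) :
    ∃ w : ℝ → F, w 0 = w₀ ∧ ContinuousOn w (Icc 0 T) ∧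
      ∀ s ∈ Ico (0:ℝ) T, HasDerivWithinAt w (B s (w s)) (Icc s T) s := by
  set τ : ℝ := 1 / (2 * L + 1) with hτdef
  have h2L : (0:ℝ) < 2 * L + 1 := by linarith
  have hτ : 0 < τ := by positivity
  have key : ∀ n : ℕ, ∀ s₀, s₀ ∈ Icc (0:ℝ) T → T - s₀ ≤ n * τ → ∀ u₀ : F,
      ∃ w : ℝ → F, w s₀ = u₀ ∧ ContinuousOn w (Icc s₀ T) ∧
        ∀ s ∈ Ico s₀ T, HasDerivWithinAt w (B s (w s)) (Icc s T) s := by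
    intro n
    induction n with
    | zero =>
      intro s₀ hs₀ hle u₀
      have hs₀T : s₀ = T := le_antisymm hs₀.2 (by simpa using hle)
      subst hs₀T
      exact ⟨fun _ => u₀, rfl, continuousOn_const, fun s hs => absurd hs.2 (not_lt.mpr hs.1)⟩
    | succ n ih =>
      intro s₀ hs₀ hle u₀
      by_cases hTs : T ≤ s₀
      · have hs₀T : s₀ = T := le_antisymm hs₀.2 hTs
        subst hs₀T
        exact ⟨fun _ => u₀, rfl, continuousOn_const, fun s hs => absurd hs.2 (not_lt.mpr hs.1)⟩
      · push_neg at hTs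
        set s₁ : ℝ := min (s₀ + τ) T with hs₁def
        have hs₀s₁ : s₀ < s₁ := lt_min (by linarith) hTs
        have hs₁T : s₁ ≤ T := min_le_right _ _
        have hs₁mem : s₁ ∈ Icc (0:ℝ) T := ⟨by linarith [hs₀.1], hs₁T⟩
        have hsub : Icc s₀ s₁ ⊆ Icc (0:ℝ) T := Icc_subset_Icc hs₀.1 hs₁T
        have hpl : IsPicardLindelof B (tmin := s₀) (tmax := s₁) ⟨s₀, le_rfl, hs₀s₁.le⟩ u₀
            ⟨‖u₀‖ + 1, by positivity⟩ 0 ⟨L * (2 * ‖u₀‖ + 2), by positivity⟩ L.toNNReal := by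
          refine ⟨?_, ?_, ?_, ?_⟩
          · intro sc hsc
            rw [lipschitzOnWith_iff_dist_le_mul]
            intro a _ b _
            rw [dist_eq_norm, dist_eq_norm, Real.coe_toNNReal L hL]
            exact hlip sc (hsub hsc) a b
          · intro u _
            exact (hBc.comp (continuous_id.prodMk continuous_const)).continuousOn
          · intro sc hsc u hu
            show ‖B sc u‖ ≤ L * (2 * ‖u₀‖ + 2)
            have h1 : ‖u‖ - ‖u₀‖ ≤ ‖u - u₀‖ := norm_sub_norm_le _ _
            have h2 : ‖u - u₀‖ ≤ ‖u₀‖ + 1 := by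
              have := mem_closedBall_iff_norm.mp hu
              change ‖u - u₀‖ ≤ ‖u₀‖ + 1 at this
              linarith
            calc ‖B sc u‖ ≤ L * (‖u‖ + 1) := hgrow sc (hsub hsc) u
              _ ≤ L * (2 * ‖u₀‖ + 2) := by nlinarith
          · show L * (2 * ‖u₀‖ + 2) * max (s₁ - s₀) (s₀ - s₀) ≤ ‖u₀‖ + 1 - ((0:NNReal):ℝ)
            rw [NNReal.coe_zero, sub_zero]
            have h1 : s₁ - s₀ ≤ τ := by
              have := min_le_left (s₀ + τ) T
              simp only [hs₁def] at *
              linarith [this]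
            have h2 : max (s₁ - s₀) (s₀ - s₀) = s₁ - s₀ := by
              rw [sub_self]
              exact max_eq_left (by linarith)
            rw [h2]
            have hτe : τ * (2 * L + 1) = 1 := by
              rw [hτdef]; field_simp
            nlinarith [norm_nonneg u₀, hs₀s₁.le, mul_le_mul_of_nonneg_left h1
              (by positivity : (0:ℝ) ≤ L * (2 * ‖u₀‖ + 2))]
        obtain ⟨u, hu0, huD⟩ := hpl.exists_eq_forall_mem_Icc_hasDerivWithinAt₀
        have hucont : ContinuousOn u (Icc s₀ s₁) := fun sc hsc =>
          (huD sc hsc).continuousWithinAt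
        have hT1 : T - s₁ ≤ n * τ := by
          rcases le_or_gt (s₀ + τ) T with h | h
          · have hs₁eq : s₁ = s₀ + τ := min_eq_left h
            have : (n + 1 : ℕ) * τ = n * τ + τ := by push_cast; ring
            rw [hs₁eq]
            rw [this] at hle
            linarith
          · have hs₁eq : s₁ = T := min_eq_right h.le
            rw [hs₁eq]
            have : (0:ℝ) ≤ n * τ := by positivity
            linarith
        obtain ⟨w', hw'0, hw'cont, hw'D⟩ := ih s₁ hs₁mem hT1 (u s₁)
        refine ⟨fun σ => if σ ≤ s₁ then u σ else w' σ, ?_, ?_, ?_⟩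
        · simp only [if_pos hs₀s₁.le]; exact hu0
        · exact continuousOn_if_le hucont hw'cont hs₀s₁.le hs₁T hw'0.symm
        · intro s hs
          by_cases hss : s < s₁
          · have hmemu : s ∈ Icc s₀ s₁ := ⟨hs.1, hss.le⟩
            have h1 : HasDerivWithinAt u (B s (u s)) (Icc s s₁) s :=
              (huD s hmemu).mono (Icc_subset_Icc hs.1 le_rfl)
            have h2 : HasDerivWithinAt (fun σ => if σ ≤ s₁ then u σ else w' σ)
                (B s (u s)) (Icc s s₁) s :=
              h1.congr (fun y hy => if_pos hy.2) (if_pos hss.le)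
            have h3 : Icc s s₁ ∈ nhdsWithin s (Icc s T) := by
              rw [mem_nhdsWithin]
              exact ⟨Iio s₁, isOpen_Iio, hss, fun y hy => ⟨hy.2.1, hy.1.le⟩⟩
            have h4 := h2.mono_of_mem_nhdsWithin h3
            simpa only [if_pos hss.le] using h4
          · push_neg at hss
            have hmem : s ∈ Ico s₁ T := ⟨hss, hs.2⟩
            have h1 := hw'D s hmem
            have heq : ∀ y ∈ Icc s T, (fun σ => if σ ≤ s₁ then u σ else w' σ) y = w' y := by
              intro y hy
              show (if y ≤ s₁ then u y else w' y) = w' y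
              by_cases hyb : y ≤ s₁
              · have hys : y = s₁ := le_antisymm hyb (le_trans hss hy.1)
                rw [if_pos hyb, hys, hw'0]
              · rw [if_neg hyb]
            have h2 : HasDerivWithinAt (fun σ => if σ ≤ s₁ then u σ else w' σ)
                (B s (w' s)) (Icc s T) s :=
              h1.congr heq (heq s ⟨le_rfl, hs.2.le⟩)
            have hws : (fun σ => if σ ≤ s₁ then u σ else w' σ) s = w' s :=
              heq s ⟨le_rfl, hs.2.le⟩
            rwa [← hws] at h2
  obtain ⟨n, hn⟩ := exists_nat_ge (T / τ)
  have hTn : T - 0 ≤ n * τ := by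
    rw [sub_zero]
    calc T = T / τ * τ := by field_simp
      _ ≤ n * τ := mul_le_mul_of_nonneg_right hn hτ.le
  exact key n 0 ⟨le_rfl, hT⟩ hTn w₀

/-! ### The joint vector field and its derivatives -/

variable {m : ℕ}

/-- The time-dependent Hamiltonian vector field, as a function on `ℝ × Phase m`. -/
def VF (m : ℕ) (K : ℝ → Phase m → ℝ) : ℝ × Phase m → Phase m :=
  fun p => sympGrad m (K p.1) p.2

/-- Partial derivative of `K` in the phase variable. -/
def dzK (m : ℕ) (K : ℝ → Phase m → ℝ) (s : ℝ) (z : Phase m) : Phase m →L[ℝ] ℝ :=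
  (fderiv ℝ (Function.uncurry K) (s, z)).comp (ContinuousLinearMap.inr ℝ ℝ (Phase m))

/-- Partial derivative of the vector field in the phase variable. -/
def AA (m : ℕ) (K : ℝ → Phase m → ℝ) (s : ℝ) (z : Phase m) : Phase m →L[ℝ] Phase m :=
  (fderiv ℝ (VF m K) (s, z)).comp (ContinuousLinearMap.inr ℝ ℝ (Phase m))

section Field

variable {K : ℝ → Phase m → ℝ} (hK : ContDiff ℝ 2 (Function.uncurry K))

include hK

theorem hKdz (s : ℝ) (z : Phase m) : HasFDerivAt (K s) (dzK m K s z) z :=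
  slice_hasFDerivAt ((hK.differentiable (by norm_num)) (s, z))

theorem VF_eq : VF m K = fun p : ℝ × Phase m =>
    ((fun i => (fderiv ℝ (Function.uncurry K) p) (0, ((0 : Fin m → ℝ), Pi.single i 1)),
      fun i => -((fderiv ℝ (Function.uncurry K) p) (0, (Pi.single i 1, (0 : Fin m → ℝ)))))) := by
  funext p
  obtain ⟨s, z⟩ := p
  have h := (hKdz hK s z).fderiv
  show sympGrad m (K s) z = _
  unfold sympGrad
  rw [h]
  simp only [dzK, ContinuousLinearMap.comp_apply, ContinuousLinearMap.inr_apply]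

theorem hVF1 : ContDiff ℝ 1 (VF m K) := by
  rw [VF_eq hK]
  have hΦ : ContDiff ℝ 1 (fderiv ℝ (Function.uncurry K)) :=
    hK.fderiv_right (by norm_num)
  exact ContDiff.prodMk (contDiff_pi.mpr fun i => hΦ.clm_apply contDiff_const)
    (contDiff_pi.mpr fun i => (hΦ.clm_apply contDiff_const).neg)

theorem hAA (s : ℝ) (z : Phase m) :
    HasFDerivAt (fun w => VF m K (s, w)) (AA m K s z) z :=
  slice_hasFDerivAt (((hVF1 hK).differentiable one_ne_zero) (s, z))

theorem contVF : Continuous (VF m K) := (hVF1 hK).continuous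

theorem contAA : Continuous fun p : ℝ × Phase m => AA m K p.1 p.2 :=
  ((hVF1 hK).continuous_fderiv one_ne_zero).clm_comp continuous_const

theorem contdzK : Continuous fun p : ℝ × Phase m => dzK m K p.1 p.2 :=
  (hK.fderiv_right (m := 1) (by norm_num)).continuous.clm_comp continuous_const

end Field

section Support

variable {K : ℝ → Phase m → ℝ} {C : Set (Phase m)}
  (hC : IsCompact C) (hsupp : ∀ t, Function.support (K t) ⊆ C)

include hsupp

theorem hK0 (s : ℝ) {z : Phase m} (hz : z ∉ C) : K s z = 0 := by
  by_contra h
  exact hz (hsupp s h)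

include hC

theorem hVF0 (s : ℝ) {z : Phase m} (hz : z ∉ C) : VF m K (s, z) = 0 := by
  have hmem : Cᶜ ∈ nhds z := hC.isClosed.isOpen_compl.mem_nhds hz
  have hev : K s =ᶠ[nhds z] fun _ => (0:ℝ) := by
    filter_upwards [hmem] with w hw using hK0 hsupp s hw
  have hfd : fderiv ℝ (K s) z = 0 := by
    rw [hev.fderiv_eq]; exact fderiv_const_apply 0
  show sympGrad m (K s) z = 0
  unfold sympGrad
  rw [hfd]
  refine Prod.ext ?_ ?_ <;> funext i <;> simp

theorem hAA0 (s : ℝ) {z : Phase m} (hz : z ∉ C) : AA m K s z = 0 := by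
  have hop : IsOpen ((univ : Set ℝ) ×ˢ Cᶜ) := isOpen_univ.prod hC.isClosed.isOpen_compl
  have hmem : ((univ : Set ℝ) ×ˢ Cᶜ) ∈ nhds (s, z) := hop.mem_nhds ⟨trivial, hz⟩
  have hev : VF m K =ᶠ[nhds (s, z)] fun _ => (0 : Phase m) := by
    filter_upwards [hmem] with p hp using hVF0 hC hsupp p.1 hp.2
  unfold AA
  rw [hev.fderiv_eq, fderiv_const_apply, ContinuousLinearMap.zero_comp]

/-- Uniform bound over a compact time window for a continuous field supported in `C`. -/
theorem bound_on {G : Type*} [NormedAddCommGroup G] (T : ℝ) {f : ℝ × Phase m → G}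
    (hf : Continuous f) (hf0 : ∀ s, ∀ z : Phase m, z ∉ C → f (s, z) = 0) :
    ∃ L : ℝ, 0 ≤ L ∧ ∀ s ∈ Icc (0:ℝ) T, ∀ z : Phase m, ‖f (s, z)‖ ≤ L := by
  obtain ⟨L₀, hL₀⟩ := (isCompact_Icc.prod hC).exists_bound_of_continuousOn hf.continuousOn
  refine ⟨max L₀ 0, le_max_right _ _, fun s hs z => ?_⟩
  by_cases hz : z ∈ C
  · exact le_trans (hL₀ (s, z) ⟨hs, hz⟩) (le_max_left _ _)
  · rw [hf0 s z hz]
    simp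

end Support

section FlowEst

variable {K : ℝ → Phase m → ℝ} {ψ : ℝ → Phase m → Phase m}

theorem contFlow (hψ : IsHamFlow m K ψ) (z : Phase m) : Continuous fun s => ψ s z :=
  continuous_iff_continuousAt.mpr fun s => (hψ.2 z s).continuousAt

theorem flow_lip (hψ : IsHamFlow m K ψ) {T L : ℝ}
    (hLip : ∀ s ∈ Icc (0:ℝ) T, ∀ z w : Phase m,
      ‖VF m K (s, z) - VF m K (s, w)‖ ≤ L * ‖z - w‖)
    (y z : Phase m) :
    ∀ s ∈ Icc (0:ℝ) T, ‖ψ s y - ψ s z‖ ≤ ‖y - z‖ * Real.exp (L * s) := by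
  intro s hs
  have hgr := norm_le_gronwallBound_of_norm_deriv_right_le
    (f := fun u => ψ u y - ψ u z) (a := 0) (b := T)
    (f' := fun u => VF m K (u, ψ u y) - VF m K (u, ψ u z)) (δ := ‖y - z‖) (K := L) (ε := 0)
    (((contFlow hψ y).sub (contFlow hψ z)).continuousOn)
    (fun u _ => ((hψ.2 y u).sub (hψ.2 z u)).hasDerivWithinAt)
    (by show ‖ψ 0 y - ψ 0 z‖ ≤ ‖y - z‖; rw [hψ.1 y, hψ.1 z])
    (fun u hu => by
      simpa using hLip u (Ico_subset_Icc_self hu) (ψ u y) (ψ u z))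
  have h2 := hgr s hs
  rwa [sub_zero, gronwallBound_ε0] at h2

theorem flow_speed (hψ : IsHamFlow m K ψ) {T M : ℝ}
    (hM : ∀ s ∈ Icc (0:ℝ) T, ∀ z : Phase m, ‖VF m K (s, z)‖ ≤ M)
    (z : Phase m) : ∀ s ∈ Icc (0:ℝ) T, ‖ψ s z - z‖ ≤ M * s := by
  intro s hs
  have := (convex_Icc (0:ℝ) T).norm_image_sub_le_of_norm_hasDerivWithin_le
    (f := fun u => ψ u z) (f' := fun u => VF m K (u, ψ u z))
    (fun u _ => (hψ.2 z u).hasDerivWithinAt)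
    (fun u hu => hM u hu (ψ u z)) ⟨le_rfl, hs.1.trans hs.2⟩ hs
  rw [hψ.1 z] at this
  calc ‖ψ s z - z‖ ≤ M * ‖s - 0‖ := this
    _ = M * s := by rw [sub_zero, Real.norm_eq_abs, abs_of_nonneg hs.1]

end FlowEst

/-- Coordinate projections on phase space. -/
def Pq (m : ℕ) (i : Fin m) : Phase m →L[ℝ] ℝ :=
  (ContinuousLinearMap.proj i).comp (ContinuousLinearMap.fst ℝ (Fin m → ℝ) (Fin m → ℝ))

def Pp (m : ℕ) (i : Fin m) : Phase m →L[ℝ] ℝ :=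
  (ContinuousLinearMap.proj i).comp (ContinuousLinearMap.snd ℝ (Fin m → ℝ) (Fin m → ℝ))

theorem clm_decomp (Λ : Phase m →L[ℝ] ℝ) (w : Phase m) :
    Λ w = (∑ i, w.1 i * Λ (Pi.single i 1, 0)) + ∑ i, w.2 i * Λ (0, Pi.single i 1) := by
  have h1 : w = (∑ i, w.1 i • ((Pi.single i 1 : Fin m → ℝ), (0 : Fin m → ℝ)))
      + ∑ i, w.2 i • ((0 : Fin m → ℝ), (Pi.single i 1 : Fin m → ℝ)) := by
    refine Prod.ext ?_ ?_ <;> funext j <;>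
      simp [Prod.fst_sum, Prod.snd_sum, Finset.sum_apply, Pi.smul_apply, Pi.single_apply,
        mul_ite, mul_one, mul_zero, smul_eq_mul, Finset.sum_ite_eq']
  conv_lhs => rw [h1]
  rw [map_add, map_sum, map_sum]
  simp only [_root_.map_smul, smul_eq_mul]

theorem VF_apply {K : ℝ → Phase m → ℝ} (hK : ContDiff ℝ 2 (Function.uncurry K))
    (s : ℝ) (z : Phase m) :
    VF m K (s, z) = (fun i => dzK m K s z (0, Pi.single i 1),
      fun i => -(dzK m K s z (Pi.single i 1, 0))) := by
  show sympGrad m (K s) z = _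
  unfold sympGrad
  rw [(hKdz hK s z).fderiv]

/-! ### Main theorem for nonnegative times -/

theorem main_nonneg (m : ℕ) (K : ℝ → Phase m → ℝ) (ψ : ℝ → Phase m → Phase m)
    (hK : ContDiff ℝ 2 (Function.uncurry K))
    (hKsupp : CompactlySupported m K)
    (hψ : IsHamFlow m K ψ) (t : ℝ) (ht : 0 ≤ t) (x : Phase m) :
    DifferentiableAt ℝ (fun y => actF m K ψ t y) x ∧
      ∀ v : Phase m,
        fderiv ℝ (fun y => actF m K ψ t y) x v
          = (∑ i, (ψ t x).2 i * fderiv ℝ (fun y => (ψ t y).1) x v i)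
            - ∑ i, x.2 i * v.1 i := by
  classical
  obtain ⟨C, hC, hsupp⟩ := hKsupp
  -- bounds on the field and its derivative over `[0, t]`
  obtain ⟨L, hL0, hLb⟩ := bound_on (K := K) hC hsupp t
    (contAA hK) (fun s z hz => hAA0 hC hsupp s hz)
  obtain ⟨M, hM0, hMb⟩ := bound_on (K := K) hC hsupp t
    (contVF hK) (fun s z hz => hVF0 hC hsupp s hz)
  have hLb' : ∀ s ∈ Icc (0:ℝ) t, ∀ z : Phase m, ‖AA m K s z‖ ≤ L := hLb
  have hMb' : ∀ s ∈ Icc (0:ℝ) t, ∀ z : Phase m, ‖VF m K (s, z)‖ ≤ M := hMb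
  -- Lipschitz bound for the field
  have hLip : ∀ s ∈ Icc (0:ℝ) t, ∀ z w : Phase m,
      ‖VF m K (s, z) - VF m K (s, w)‖ ≤ L * ‖z - w‖ := by
    intro s hs z w
    exact convex_univ.norm_image_sub_le_of_norm_hasFDerivWithin_le
      (f := fun u => VF m K (s, u)) (f' := fun u => AA m K s u)
      (fun u _ => (hAA hK s u).hasFDerivWithinAt) (fun u _ => hLb' s hs u)
      (mem_univ w) (mem_univ z)
  have hcontflow : ∀ z : Phase m, Continuous fun s => ψ s z := contFlow hψ
  set CL : ℝ := Real.exp (L * t) with hCLdef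
  have hCL1 : 1 ≤ CL := Real.one_le_exp (by positivity)
  have hCL0 : 0 < CL := lt_of_lt_of_le one_pos hCL1
  have hflowlip : ∀ y z : Phase m, ∀ s ∈ Icc (0:ℝ) t, ‖ψ s y - ψ s z‖ ≤ ‖y - z‖ * CL := by
    intro y z s hs
    refine le_trans (flow_lip hψ hLip y z s hs) ?_
    have : Real.exp (L * s) ≤ CL := Real.exp_le_exp.mpr (by nlinarith [hs.1, hs.2])
    nlinarith [norm_nonneg (y - z)]
  have hspeed : ∀ z : Phase m, ∀ s ∈ Icc (0:ℝ) t, ‖ψ s z - z‖ ≤ M * t := by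
    intro z s hs
    refine le_trans (flow_speed hψ hMb' z s hs) ?_
    nlinarith [hs.1, hs.2]
  -- the variational (linearized) flow
  set B : ℝ → (Phase m →L[ℝ] Phase m) → (Phase m →L[ℝ] Phase m) :=
    fun s Wop => (AA m K s (ψ s x)).comp Wop with hBdef
  have hacont : Continuous fun s => AA m K s (ψ s x) :=
    (contAA hK).comp (continuous_id.prodMk (hcontflow x))
  have hBc : Continuous fun p : ℝ × (Phase m →L[ℝ] Phase m) => B p.1 p.2 :=
    (hacont.comp continuous_fst).clm_comp continuous_snd
  have hBlip : ∀ s ∈ Icc (0:ℝ) t, ∀ u v : Phase m →L[ℝ] Phase m,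
      ‖B s u - B s v‖ ≤ L * ‖u - v‖ := by
    intro s hs u v
    have h1 : B s u - B s v = (AA m K s (ψ s x)).comp (u - v) := by
      rw [hBdef]; simp [ContinuousLinearMap.comp_sub]
    rw [h1]
    exact le_trans (ContinuousLinearMap.opNorm_comp_le _ _)
      (mul_le_mul_of_nonneg_right (hLb' s hs _) (norm_nonneg _))
  have hBgrow : ∀ s ∈ Icc (0:ℝ) t, ∀ u : Phase m →L[ℝ] Phase m,
      ‖B s u‖ ≤ L * (‖u‖ + 1) := by
    intro s hs u
    calc ‖B s u‖ ≤ ‖AA m K s (ψ s x)‖ * ‖u‖ := ContinuousLinearMap.opNorm_comp_le _ _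
      _ ≤ L * ‖u‖ := mul_le_mul_of_nonneg_right (hLb' s hs _) (norm_nonneg _)
      _ ≤ L * (‖u‖ + 1) := by nlinarith
  obtain ⟨W, hW0, hWcont, hWD⟩ := glue_ode B t L hL0 hBc hBlip hBgrow ht
    (ContinuousLinearMap.id ℝ (Phase m))
  have hWIci : ∀ s ∈ Ico (0:ℝ) t, HasDerivWithinAt W (B s (W s)) (Ici s) s := fun s hs =>
    (hWD s hs).mono_of_mem_nhdsWithin (Icc_mem_nhdsGE_of_mem ⟨le_rfl, hs.2⟩)
  -- the Grönwall-type constant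
  have hC2 : ∃ C₂ : ℝ, 0 < C₂ ∧ ∀ ε ≥ (0:ℝ), ∀ s ∈ Icc (0:ℝ) t,
      gronwallBound 0 L ε s ≤ ε * C₂ := by
    by_cases hLz : L = 0
    · refine ⟨t + 1, by linarith, fun ε hε s hs => ?_⟩
      rw [hLz, gronwallBound_K0]
      show 0 + ε * s ≤ ε * (t + 1)
      nlinarith [hs.1, hs.2]
    · have hLpos : 0 < L := lt_of_le_of_ne hL0 (Ne.symm hLz)
      refine ⟨Real.exp (L * t) / L, by positivity, fun ε hε s hs => ?_⟩
      rw [gronwallBound_of_K_ne_0 hLz]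
      have h1 : Real.exp (L * s) - 1 ≤ Real.exp (L * t) := by
        have := Real.exp_le_exp.mpr (mul_le_mul_of_nonneg_left hs.2 hL0)
        nlinarith [Real.exp_pos (L * s)]
      have h2 : 0 ≤ ε / L := by positivity
      calc 0 * Real.exp (L * s) + ε / L * (Real.exp (L * s) - 1)
          = ε / L * (Real.exp (L * s) - 1) := by ring
        _ ≤ ε / L * Real.exp (L * t) := by nlinarith [Real.exp_pos (L * s)]
        _ = ε * (Real.exp (L * t) / L) := by ring
  obtain ⟨C₂, hC₂pos, hC₂⟩ := hC2
  -- uniform continuity of `AA` along the trajectory of `x`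
  have hUC : ∀ ε > (0:ℝ), ∃ δ > (0:ℝ), ∀ s ∈ Icc (0:ℝ) t, ∀ z : Phase m,
      ‖z - ψ s x‖ ≤ δ → ‖AA m K s z - AA m K s (ψ s x)‖ ≤ ε := by
    intro ε hε
    have hG : Continuous fun p : ℝ × Phase m => AA m K p.1 (ψ p.1 x + p.2) :=
      (contAA hK).comp (continuous_fst.prodMk
        (((hcontflow x).comp continuous_fst).add continuous_snd))
    have hKset : IsCompact ((Icc (0:ℝ) t) ×ˢ (Metric.closedBall (0 : Phase m) 1)) :=
      isCompact_Icc.prod (isCompact_closedBall _ _)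
    have hUCon := hKset.uniformContinuousOn_of_continuous hG.continuousOn
    rw [Metric.uniformContinuousOn_iff] at hUCon
    obtain ⟨δ₀, hδ₀, hδ⟩ := hUCon ε hε
    refine ⟨min (δ₀ / 2) 1, by positivity, ?_⟩
    intro s hs z hz
    have hu1 : ‖z - ψ s x‖ ≤ 1 := le_trans hz (min_le_right _ _)
    have hmem1 : (s, z - ψ s x) ∈ (Icc (0:ℝ) t) ×ˢ (Metric.closedBall (0 : Phase m) 1) :=
      ⟨hs, by simpa [Metric.mem_closedBall, dist_zero_right] using hu1⟩
    have hmem2 : (s, (0 : Phase m)) ∈ (Icc (0:ℝ) t) ×ˢ (Metric.closedBall (0 : Phase m) 1) :=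
      ⟨hs, by simp⟩
    have hdist : dist (s, z - ψ s x) ((s, (0 : Phase m))) < δ₀ := by
      rw [Prod.dist_eq]
      simp only [dist_self, dist_zero_right]
      have : max (0:ℝ) ‖z - ψ s x‖ = ‖z - ψ s x‖ := max_eq_right (norm_nonneg _)
      rw [this]
      calc ‖z - ψ s x‖ ≤ min (δ₀ / 2) 1 := hz
        _ ≤ δ₀ / 2 := min_le_left _ _
        _ < δ₀ := by linarith
    have hfin := hδ _ hmem1 _ hmem2 hdist
    simp only [add_sub_cancel, add_zero] at hfin
    rw [dist_eq_norm] at hfin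
    exact hfin.le
  -- Taylor estimate for the field along the trajectory
  have hTay : ∀ ε > (0:ℝ), ∃ δ > (0:ℝ), ∀ s ∈ Icc (0:ℝ) t, ∀ z : Phase m,
      ‖z - ψ s x‖ ≤ δ →
      ‖VF m K (s, z) - VF m K (s, ψ s x) - AA m K s (ψ s x) (z - ψ s x)‖
        ≤ ε * ‖z - ψ s x‖ := by
    intro ε hε
    obtain ⟨δ, hδpos, hδ⟩ := hUC ε hε
    refine ⟨δ, hδpos, fun s hs z hz => ?_⟩
    have hz' : z ∈ Metric.closedBall (ψ s x) δ := by
      rw [Metric.mem_closedBall, dist_eq_norm]; exact hz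
    have hmvt := (convex_closedBall (ψ s x) δ).norm_image_sub_le_of_norm_hasFDerivWithin_le
      (f := fun w => VF m K (s, w) - AA m K s (ψ s x) w)
      (f' := fun w => AA m K s w - AA m K s (ψ s x))
      (fun w _ => ((hAA hK s w).sub ((AA m K s (ψ s x)).hasFDerivAt)).hasFDerivWithinAt)
      (fun w hw => hδ s hs w (by rwa [Metric.mem_closedBall, dist_eq_norm] at hw))
      (Metric.mem_closedBall_self hδpos.le) hz'
    have hre : VF m K (s, z) - VF m K (s, ψ s x) - AA m K s (ψ s x) (z - ψ s x)
        = (VF m K (s, z) - AA m K s (ψ s x) z)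
          - (VF m K (s, ψ s x) - AA m K s (ψ s x) (ψ s x)) := by
      rw [map_sub]; abel
    rw [hre]
    exact hmvt
  -- key estimate: `W s` is the derivative of the flow in the initial condition
  have hclaim : ∀ ε > (0:ℝ), ∃ δ > (0:ℝ), ∀ y : Phase m, ‖y - x‖ ≤ δ →
      ∀ s ∈ Icc (0:ℝ) t, ‖ψ s y - ψ s x - W s (y - x)‖ ≤ ε * ‖y - x‖ := by
    intro ε hε
    have hden : 0 < CL * C₂ := by positivity
    set ε' : ℝ := ε / (CL * C₂) with hε'def
    have hε' : 0 < ε' := by positivity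
    obtain ⟨δ', hδ'pos, hTayδ⟩ := hTay ε' hε'
    refine ⟨δ' / CL, by positivity, ?_⟩
    intro y hy
    set r : ℝ → Phase m := fun s => ψ s y - ψ s x - W s (y - x) with hrdef
    have hr0 : r 0 = 0 := by
      rw [hrdef]; simp only [hψ.1, hW0]; simp
    have hrcont : ContinuousOn r (Icc 0 t) :=
      (((hcontflow y).sub (hcontflow x)).continuousOn).sub
        (hWcont.clm_apply continuousOn_const)
    have hrD : ∀ s ∈ Ico (0:ℝ) t, HasDerivWithinAt r
        (VF m K (s, ψ s y) - VF m K (s, ψ s x) - B s (W s) (y - x)) (Ici s) s := by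
      intro s hs
      have h1 : HasDerivWithinAt (fun u => ψ u y - ψ u x)
          (VF m K (s, ψ s y) - VF m K (s, ψ s x)) (Ici s) s :=
        ((hψ.2 y s).sub (hψ.2 x s)).hasDerivWithinAt
      have h2 : HasDerivWithinAt (fun u => W u (y - x)) (B s (W s) (y - x)) (Ici s) s := by
        have := (hWIci s hs).clm_apply (hasDerivWithinAt_const s (Ici s) (y - x))
        simpa using this
      exact h1.sub h2
    have hbound : ∀ s ∈ Ico (0:ℝ) t,
        ‖VF m K (s, ψ s y) - VF m K (s, ψ s x) - B s (W s) (y - x)‖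
          ≤ L * ‖r s‖ + ε' * CL * ‖y - x‖ := by
      intro s hs
      have hsIcc := Ico_subset_Icc_self hs
      have hflip : ‖ψ s y - ψ s x‖ ≤ ‖y - x‖ * CL := hflowlip y x s hsIcc
      have hδ'b : ‖ψ s y - ψ s x‖ ≤ δ' := by
        calc ‖ψ s y - ψ s x‖ ≤ ‖y - x‖ * CL := hflip
          _ ≤ (δ' / CL) * CL := mul_le_mul_of_nonneg_right hy hCL0.le
          _ = δ' := by field_simp
      have hT1 : ‖VF m K (s, ψ s y) - VF m K (s, ψ s x)
          - AA m K s (ψ s x) (ψ s y - ψ s x)‖ ≤ ε' * ‖ψ s y - ψ s x‖ := by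
        have := hTayδ s hsIcc (ψ s y) (by rwa [show ψ s y - ψ s x = ψ s y - ψ s x from rfl])
        exact this
      have hre : VF m K (s, ψ s y) - VF m K (s, ψ s x) - B s (W s) (y - x)
          = (VF m K (s, ψ s y) - VF m K (s, ψ s x) - AA m K s (ψ s x) (ψ s y - ψ s x))
            + AA m K s (ψ s x) (r s) := by
        have hB : B s (W s) (y - x) = AA m K s (ψ s x) (W s (y - x)) := rfl
        rw [hB, hrdef]
        simp only [map_sub]
        abel
      rw [hre]
      calc ‖_ + AA m K s (ψ s x) (r s)‖
          ≤ ‖VF m K (s, ψ s y) - VF m K (s, ψ s x) - AA m K s (ψ s x) (ψ s y - ψ s x)‖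
            + ‖AA m K s (ψ s x) (r s)‖ := norm_add_le _ _
        _ ≤ ε' * ‖ψ s y - ψ s x‖ + L * ‖r s‖ := by
            refine add_le_add hT1 ?_
            exact le_trans ((AA m K s (ψ s x)).le_opNorm _)
              (mul_le_mul_of_nonneg_right (hLb' s hsIcc _) (norm_nonneg _))
        _ ≤ L * ‖r s‖ + ε' * CL * ‖y - x‖ := by nlinarith [norm_nonneg (r s)]
    have hgr := norm_le_gronwallBound_of_norm_deriv_right_le
      (f := r) (a := 0) (b := t) (δ := 0) (K := L) (ε := ε' * CL * ‖y - x‖)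
      hrcont hrD (by rw [hr0]; simp) hbound
    intro s hs
    have h1 := hgr s hs
    rw [sub_zero] at h1
    have h2 := hC₂ (ε' * CL * ‖y - x‖) (by positivity) s hs
    calc ‖r s‖ ≤ gronwallBound 0 L (ε' * CL * ‖y - x‖) s := h1
      _ ≤ ε' * CL * ‖y - x‖ * C₂ := h2
      _ = ε * ‖y - x‖ := by rw [hε'def]; field_simp
  have hFder : ∀ s ∈ Icc (0:ℝ) t, HasFDerivAt (fun y => ψ s y) (W s) x := by
    intro s hs
    rw [hasFDerivAt_iff_isLittleO_nhds_zero, Asymptotics.isLittleO_iff]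
    intro c hc
    obtain ⟨δ, hδpos, hδ⟩ := hclaim c hc
    filter_upwards [Metric.closedBall_mem_nhds (0 : Phase m) hδpos] with h hh
    have hh' : ‖(x + h) - x‖ ≤ δ := by
      rwa [add_sub_cancel_left, ← dist_zero_right, ← Metric.mem_closedBall]
    have := hδ (x + h) hh' s hs
    rwa [add_sub_cancel_left] at this
  -- the integrand as a function of the phase point
  set gI : ℝ → Phase m → ℝ :=
    fun s z => (∑ i, z.2 i * (VF m K (s, z)).1 i) - K s z with hgIdef
  have hgC1 : ContDiff ℝ 1 (fun p : ℝ × Phase m => gI p.1 p.2) := by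
    refine ContDiff.sub ?_ (hK.of_le (by norm_num))
    refine ContDiff.sum fun i _ => ContDiff.mul ?_ ?_
    · exact ((Pp m i).comp (ContinuousLinearMap.snd ℝ ℝ (Phase m))).contDiff
    · exact (Pq m i).contDiff.comp (hVF1 hK)
  -- explicit derivative of `gI s` in the phase variable
  set DG : ℝ → Phase m → (Phase m →L[ℝ] ℝ) := fun s z =>
    (∑ i, ((z.2 i) • ((Pq m i).comp (AA m K s z)) + ((VF m K (s, z)).1 i) • (Pp m i)))
      - dzK m K s z with hDGdef
  have hgD : ∀ (s : ℝ) (z : Phase m), HasFDerivAt (gI s) (DG s z) z := by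
    intro s z
    refine HasFDerivAt.sub ?_ (hKdz hK s z)
    refine HasFDerivAt.fun_sum fun i _ => ?_
    have hc : HasFDerivAt (fun w : Phase m => w.2 i) (Pp m i) z := (Pp m i).hasFDerivAt
    have hd : HasFDerivAt (fun w => (VF m K (s, w)).1 i) ((Pq m i).comp (AA m K s z)) z :=
      (Pq m i).hasFDerivAt.comp z (hAA hK s z)
    exact hc.mul hd
  have hDGcont : Continuous fun p : ℝ × Phase m => DG p.1 p.2 := by
    refine Continuous.sub ?_ (contdzK hK)
    refine continuous_finset_sum _ fun i _ => Continuous.add ?_ ?_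
    · exact (((Pp m i).comp (ContinuousLinearMap.snd ℝ ℝ (Phase m))).continuous).smul
        (continuous_const.clm_comp (contAA hK))
    · exact (((Pq m i).continuous).comp (contVF hK)).smul continuous_const
  -- a compact region containing every relevant trajectory
  set ρ : ℝ := ‖x‖ + 1 + M * t with hρdef
  have hReg : ∀ y ∈ Metric.ball x 1, ∀ s ∈ Icc (0:ℝ) t,
      ψ s y ∈ Metric.closedBall (0 : Phase m) ρ := by
    intro y hy s hs
    rw [Metric.mem_closedBall, dist_zero_right]
    have h1 : ‖ψ s y - y‖ ≤ M * t := hspeed y s hs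
    have h2 : ‖y - x‖ < 1 := by rwa [Metric.mem_ball, dist_eq_norm] at hy
    have h3 : ‖y‖ ≤ ‖x‖ + ‖y - x‖ := by
      calc ‖y‖ = ‖x + (y - x)‖ := by congr 1; abel
        _ ≤ ‖x‖ + ‖y - x‖ := norm_add_le _ _
    calc ‖ψ s y‖ = ‖(ψ s y - y) + y‖ := by congr 1; abel
      _ ≤ ‖ψ s y - y‖ + ‖y‖ := norm_add_le _ _
      _ ≤ ρ := by rw [hρdef]; linarith
  obtain ⟨Lg, hLg0, hLgb⟩ : ∃ Lg : ℝ, 0 ≤ Lg ∧ ∀ s ∈ Icc (0:ℝ) t,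
      ∀ z ∈ Metric.closedBall (0 : Phase m) ρ, ‖DG s z‖ ≤ Lg := by
    obtain ⟨Lg₀, h⟩ := (isCompact_Icc.prod (isCompact_closedBall (0 : Phase m) ρ)
      ).exists_bound_of_continuousOn hDGcont.continuousOn
    exact ⟨max Lg₀ 0, le_max_right _ _, fun s hs z hz =>
      le_trans (h (s, z) ⟨hs, hz⟩) (le_max_left _ _)⟩
  have hgLip : ∀ s ∈ Icc (0:ℝ) t, ∀ z ∈ Metric.closedBall (0 : Phase m) ρ,
      ∀ w ∈ Metric.closedBall (0 : Phase m) ρ, ‖gI s z - gI s w‖ ≤ Lg * ‖z - w‖ := by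
    intro s hs z hz w hw
    exact (convex_closedBall (0 : Phase m) ρ).norm_image_sub_le_of_norm_hasFDerivWithin_le
      (f := gI s) (f' := DG s)
      (fun u _ => (hgD s u).hasFDerivWithinAt) (fun u hu => hLgb s hs u hu) hw hz
  -- rewriting the action
  have hactEq : ∀ y : Phase m, actF m K ψ t y = ∫ s in (0:ℝ)..t, gI s (ψ s y) := by
    intro y
    unfold actF
    congr 1
    funext s
    rw [hgIdef]
    congr 1
    refine Finset.sum_congr rfl fun i _ => ?_
    congr 1
    have hcomp : HasDerivAt (fun u => (ψ u y).1 i) ((VF m K (s, ψ s y)).1 i) s :=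
      (Pq m i).hasFDerivAt.comp_hasDerivAt s (hψ.2 y s)
    exact hcomp.deriv
  -- differentiating under the integral sign
  set Fp : ℝ → Phase m →L[ℝ] ℝ := fun s => (DG s (ψ s x)).comp (W s) with hFpdef
  have hFpcontOn : ContinuousOn Fp (Icc 0 t) :=
    ((hDGcont.comp (continuous_id.prodMk (hcontflow x))).continuousOn).clm_comp hWcont
  have hIsub : Set.uIoc (0:ℝ) t ⊆ Icc (0:ℝ) t := by
    rw [uIoc_of_le ht]; exact Ioc_subset_Icc_self
  have hcontF : ∀ y : Phase m, Continuous fun s => gI s (ψ s y) := fun y =>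
    hgC1.continuous.comp (continuous_id.prodMk (hcontflow y))
  have hlipAE : ∀ᵐ s ∂(volume : Measure ℝ), s ∈ Set.uIoc (0:ℝ) t →
      LipschitzOnWith (Real.nnabs (Lg * CL)) (fun y => gI s (ψ s y)) (Metric.ball x 1) := by
    refine ae_of_all _ fun s hs => ?_
    have hsIcc : s ∈ Icc (0:ℝ) t := hIsub hs
    rw [lipschitzOnWith_iff_dist_le_mul]
    intro y hy y' hy'
    rw [dist_eq_norm, dist_eq_norm]
    have h1 := hgLip s hsIcc (ψ s y) (hReg y hy s hsIcc) (ψ s y') (hReg y' hy' s hsIcc)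
    have h2 := hflowlip y y' s hsIcc
    have h3 : (Real.nnabs (Lg * CL) : ℝ) = Lg * CL := by
      rw [Real.coe_nnabs, abs_of_nonneg (by positivity)]
    rw [h3]
    calc ‖gI s (ψ s y) - gI s (ψ s y')‖ ≤ Lg * ‖ψ s y - ψ s y'‖ := h1
      _ ≤ Lg * (‖y - y'‖ * CL) := mul_le_mul_of_nonneg_left h2 hLg0
      _ = Lg * CL * ‖y - y'‖ := by ring
  have hdiffAE : ∀ᵐ s ∂(volume : Measure ℝ), s ∈ Set.uIoc (0:ℝ) t →
      HasFDerivAt (fun y => gI s (ψ s y)) (Fp s) x := by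
    refine ae_of_all _ fun s hs => ?_
    have hsIcc : s ∈ Icc (0:ℝ) t := hIsub hs
    exact (hgD s (ψ s x)).comp x (hFder s hsIcc)
  have hmain := intervalIntegral.hasFDerivAt_integral_of_dominated_loc_of_lip
    (𝕜 := ℝ) (μ := volume) (F := fun y s => gI s (ψ s y)) (F' := Fp) (x₀ := x)
    (bound := fun _ => Lg * CL) (a := 0) (b := t) (s := Metric.ball x 1) (Metric.ball_mem_nhds x one_pos)
    (Filter.Eventually.of_forall fun y => (hcontF y).aestronglyMeasurable)
    ((hcontF x).intervalIntegrable 0 t)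
    ((hFpcontOn.mono hIsub).aestronglyMeasurable measurableSet_uIoc)
    hlipAE
    (intervalIntegrable_const)
    hdiffAE
  obtain ⟨hFpInt, hMain⟩ := hmain
  have hfun : (fun y => actF m K ψ t y) = fun y => ∫ s in (0:ℝ)..t, gI s (ψ s y) :=
    funext hactEq
  constructor
  · rw [hfun]; exact hMain.differentiableAt
  intro v
  have hfderiv : fderiv ℝ (fun y => actF m K ψ t y) x = ∫ s in (0:ℝ)..t, Fp s := by
    rw [hfun]; exact hMain.fderiv
  rw [hfderiv]
  have happly : (∫ s in (0:ℝ)..t, Fp s) v = ∫ s in (0:ℝ)..t, Fp s v := by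
    rw [intervalIntegral.integral_of_le ht, intervalIntegral.integral_of_le ht]
    exact ContinuousLinearMap.integral_apply
      ((intervalIntegrable_iff_integrableOn_Ioc_of_le ht).mp hFpInt) v
  rw [happly]
  -- the fundamental theorem of calculus for `h(s) = ⟨P(s,x), (W s v)_q⟩`
  set hfun2 : ℝ → ℝ := fun s => ∑ i, (ψ s x).2 i * ((W s v).1 i) with hh2def
  have hWvcont : ContinuousOn (fun s => W s v) (Icc 0 t) :=
    hWcont.clm_apply continuousOn_const
  have hhcont : ContinuousOn hfun2 (Icc 0 t) := by
    refine continuousOn_finset_sum _ fun i _ => ContinuousOn.mul ?_ ?_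
    · exact (((continuous_apply i).comp continuous_snd).comp (hcontflow x)).continuousOn
    · exact ((continuous_apply i).comp continuous_fst).comp_continuousOn hWvcont
  have hhderiv : ∀ s ∈ Ioo (0:ℝ) t, HasDerivWithinAt hfun2 (Fp s v) (Ioi s) s := by
    intro s hs
    have hsIco : s ∈ Ico (0:ℝ) t := ⟨hs.1.le, hs.2⟩
    have hsIcc : s ∈ Icc (0:ℝ) t := ⟨hs.1.le, hs.2.le⟩
    have hWv : HasDerivWithinAt (fun u => W u v) ((B s (W s)) v) (Ioi s) s := by
      have h0 := ((hWIci s hsIco).clm_apply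
        (hasDerivWithinAt_const s (Ici s) v)).mono Ioi_subset_Ici_self
      simpa using h0
    have hterm : ∀ i : Fin m, HasDerivWithinAt (fun u => (ψ u x).2 i * ((W u v).1 i))
        ((VF m K (s, ψ s x)).2 i * ((W s v).1 i)
          + (ψ s x).2 i * ((AA m K s (ψ s x) (W s v)).1 i)) (Ioi s) s := by
      intro i
      have h1 : HasDerivWithinAt (fun u => (ψ u x).2 i)
          ((VF m K (s, ψ s x)).2 i) (Ioi s) s :=
        ((Pp m i).hasFDerivAt.comp_hasDerivAt s (hψ.2 x s)).hasDerivWithinAt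
      have h2 : HasDerivWithinAt (fun u => (W u v).1 i)
          ((AA m K s (ψ s x) (W s v)).1 i) (Ioi s) s :=
        (Pq m i).hasFDerivAt.comp_hasDerivWithinAt s hWv
      exact h1.mul h2
    have hsum := HasDerivWithinAt.fun_sum (u := Finset.univ) fun i _ => hterm i
    have hkey : (∑ i, ((VF m K (s, ψ s x)).2 i * ((W s v).1 i)
        + (ψ s x).2 i * ((AA m K s (ψ s x) (W s v)).1 i))) = Fp s v := by
      set z := ψ s x
      set w := W s v with hwdef
      have hFpv : Fp s v = DG s z (W s v) := rfl
      rw [hFpv, ← hwdef, hDGdef]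
      simp only [ContinuousLinearMap.sub_apply, ContinuousLinearMap.sum_apply,
        ContinuousLinearMap.add_apply, ContinuousLinearMap.smul_apply,
        ContinuousLinearMap.comp_apply, smul_eq_mul]
      have hPq : ∀ (u : Phase m) (i : Fin m), Pq m i u = u.1 i := fun u i => rfl
      have hPp : ∀ (u : Phase m) (i : Fin m), Pp m i u = u.2 i := fun u i => rfl
      simp only [hPq, hPp]
      have hVFz := VF_apply hK s z
      have hVF1i : ∀ i : Fin m, (VF m K (s, z)).1 i = dzK m K s z (0, Pi.single i 1) := by
        intro i; rw [hVFz]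
      have hVF2i : ∀ i : Fin m, (VF m K (s, z)).2 i = -(dzK m K s z (Pi.single i 1, 0)) := by
        intro i; rw [hVFz]
      simp only [hVF1i, hVF2i]
      have hdec := clm_decomp (dzK m K s z) w
      have e1 : (∑ i, -(dzK m K s z (Pi.single i 1, 0)) * w.1 i)
          = -(∑ i, w.1 i * dzK m K s z (Pi.single i 1, 0)) := by
        rw [← Finset.sum_neg_distrib]
        exact Finset.sum_congr rfl fun i _ => by ring
      have e2 : (∑ i, dzK m K s z (0, Pi.single i 1) * w.2 i)
          = ∑ i, w.2 i * dzK m K s z (0, Pi.single i 1) :=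
        Finset.sum_congr rfl fun i _ => mul_comm _ _
      rw [Finset.sum_add_distrib, Finset.sum_add_distrib, e1, e2]
      linarith [hdec]
    rw [← hkey]
    exact hsum
  have hFpvInt : IntervalIntegrable (fun s => Fp s v) volume 0 t := by
    refine ContinuousOn.intervalIntegrable ?_
    rw [uIcc_of_le ht]
    exact hFpcontOn.clm_apply continuousOn_const
  have hFTC := intervalIntegral.integral_eq_sub_of_hasDeriv_right_of_le ht hhcont
    hhderiv hFpvInt
  rw [hFTC]
  -- evaluate the endpoints
  have hψ0 : ψ 0 x = x := hψ.1 x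
  have hh0 : hfun2 0 = ∑ i, x.2 i * v.1 i := by
    rw [hh2def]
    simp only [hψ0, hW0]
    rfl
  have hQ : fderiv ℝ (fun y => (ψ t y).1) x
      = (ContinuousLinearMap.fst ℝ (Fin m → ℝ) (Fin m → ℝ)).comp (W t) := by
    exact ((ContinuousLinearMap.fst ℝ (Fin m → ℝ) (Fin m → ℝ)).hasFDerivAt.comp x
      (hFder t ⟨ht, le_rfl⟩)).fderiv
  rw [hh0, hQ]
  congr 1

end ActionAux

/-- Let `ψ^t` be the Hamiltonian flow of a compactly supported `C^2`
Hamiltonian `K` on `T^*ℝ^m`, and `F` the classical action. Then for each `t` the map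
`x ↦ F(t,x)` is differentiable with differential `(ψ^t)^*λ − λ`, where `λ = Σ p_i dq_i`:
for every tangent vector `v = (v_q, v_p)`,
`D_x F(t,x)(v) = ⟨P(t,x), D_x Q(t,x)(v)⟩ − ⟨p, v_q⟩`. -/
theorem action_primitive_of_liouville_difference
    (m : ℕ) (K : ℝ → Phase m → ℝ) (ψ : ℝ → Phase m → Phase m)
    (hK : ContDiff ℝ 2 (Function.uncurry K))
    (hKsupp : CompactlySupported m K)
    (hψ : IsHamFlow m K ψ) :
    ∀ (t : ℝ) (x : Phase m),
      DifferentiableAt ℝ (fun y => actF m K ψ t y) x ∧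
      ∀ v : Phase m,
        fderiv ℝ (fun y => actF m K ψ t y) x v
          = (∑ i, (ψ t x).2 i * fderiv ℝ (fun y => (ψ t y).1) x v i)
            - ∑ i, x.2 i * v.1 i := by
  intro t x
  rcases le_or_gt 0 t with ht | ht
  · exact ActionAux.main_nonneg m K ψ hK hKsupp hψ t ht x
  · -- time reversal: apply the nonnegative-time case to `K'(s) = -K(-s)`
    set K' : ℝ → Phase m → ℝ := fun s z => -K (-s) z with hK'def
    set ψ' : ℝ → Phase m → Phase m := fun s z => ψ (-s) z with hψ'def
    have hK' : ContDiff ℝ 2 (Function.uncurry K') := by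
      have h1 : Function.uncurry K'
          = fun p : ℝ × Phase m => -(Function.uncurry K (-p.1, p.2)) := rfl
      rw [h1]
      exact (hK.comp (ContDiff.prodMk (contDiff_fst.neg) contDiff_snd)).neg
    have hK'supp : CompactlySupported m K' := by
      obtain ⟨C, hC, hsupp⟩ := hKsupp
      refine ⟨C, hC, fun s z hz => ?_⟩
      apply hsupp (-s)
      simp only [Function.mem_support] at hz ⊢
      intro h0
      exact hz (by simp [hK'def, h0])
    have hsymp : ∀ (s : ℝ) (w : Phase m),
        sympGrad m (K' s) w = -sympGrad m (K (-s)) w := by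
      intro s w
      have hs1 : K' s = fun z => -(K (-s) z) := rfl
      have hneg : fderiv ℝ (K' s) w = -fderiv ℝ (K (-s)) w := by
        rw [hs1, fderiv_fun_neg]
      unfold sympGrad
      rw [hneg]
      refine Prod.ext ?_ ?_ <;> funext i <;> simp
    have hψ'flow : IsHamFlow m K' ψ' := by
      constructor
      · intro z
        show ψ (-0) z = z
        rw [neg_zero]; exact hψ.1 z
      · intro z s
        have h0 : HasDerivAt (fun u => ψ u z) (sympGrad m (K (-s)) (ψ (-s) z)) (-s) :=
          hψ.2 z (-s)
        have h1 : HasDerivAt ((fun u => ψ u z) ∘ (fun u : ℝ => -u))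
            ((-1 : ℝ) • sympGrad m (K (-s)) (ψ (-s) z)) s :=
          HasDerivAt.scomp (𝕜 := ℝ) s h0 (hasDerivAt_neg s)
        have h2 : sympGrad m (K' s) (ψ' s z)
            = (-1 : ℝ) • sympGrad m (K (-s)) (ψ (-s) z) := by
          show sympGrad m (K' s) (ψ (-s) z) = _
          rw [hsymp]
          simp
        rw [h2]
        exact h1
    have hrev := ActionAux.main_nonneg m K' ψ' hK' hK'supp hψ'flow (-t) (by linarith) x
    -- translate the conclusion back
    have hψ't : ∀ y : Phase m, ψ' (-t) y = ψ t y := by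
      intro y; show ψ (-(-t)) y = ψ t y; rw [neg_neg]
    have hint : ∀ (y : Phase m) (s : ℝ),
        ((∑ i, (ψ' s y).2 i * deriv (fun u => (ψ' u y).1 i) s) - K' s (ψ' s y))
          = -((∑ i, (ψ (-s) y).2 i * deriv (fun u => (ψ u y).1 i) (-s))
              - K (-s) (ψ (-s) y)) := by
      intro y s
      have e1 : ∀ i : Fin m, deriv (fun u => (ψ' u y).1 i) s
          = -(deriv (fun u => (ψ u y).1 i) (-s)) := by
        intro i
        have h1 : HasDerivAt (fun u => (ψ u y).1 i)
            ((sympGrad m (K (-s)) (ψ (-s) y)).1 i) (-s) :=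
          (ActionAux.Pq m i).hasFDerivAt.comp_hasDerivAt (-s) (hψ.2 y (-s))
        have h2 : HasDerivAt ((fun u => (ψ u y).1 i) ∘ (fun u : ℝ => -u))
            ((-1 : ℝ) • ((sympGrad m (K (-s)) (ψ (-s) y)).1 i)) s :=
          HasDerivAt.scomp (𝕜 := ℝ) s h1 (hasDerivAt_neg s)
        have h3 : deriv (fun u => (ψ' u y).1 i) s
            = (-1 : ℝ) • ((sympGrad m (K (-s)) (ψ (-s) y)).1 i) := h2.deriv
        rw [h3, h1.deriv]
        simp
      have e2 : K' s (ψ' s y) = -(K (-s) (ψ (-s) y)) := rfl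
      rw [e2]
      have e3 : (∑ i, (ψ' s y).2 i * deriv (fun u => (ψ' u y).1 i) s)
          = -∑ i, (ψ (-s) y).2 i * deriv (fun u => (ψ u y).1 i) (-s) := by
        rw [← Finset.sum_neg_distrib]
        refine Finset.sum_congr rfl fun i _ => ?_
        rw [e1 i]
        show (ψ (-s) y).2 i * -(deriv (fun u => (ψ u y).1 i) (-s)) = _
        ring
      rw [e3]
      ring
    have hact : ∀ y : Phase m, actF m K' ψ' (-t) y = actF m K ψ t y := by
      intro y
      unfold actF
      rw [show (fun s => (∑ i, (ψ' s y).2 i * deriv (fun u => (ψ' u y).1 i) s)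
          - K' s (ψ' s y))
        = fun s => -((fun σ => (∑ i, (ψ σ y).2 i * deriv (fun u => (ψ u y).1 i) σ)
            - K σ (ψ σ y)) (-s)) from funext fun s => hint y s]
      rw [intervalIntegral.integral_neg]
      rw [intervalIntegral.integral_comp_neg
        (f := fun σ => (∑ i, (ψ σ y).2 i * deriv (fun u => (ψ u y).1 i) σ) - K σ (ψ σ y))]
      rw [neg_neg, neg_zero]
      rw [intervalIntegral.integral_symm]
      simp
    have hfun : (fun y => actF m K' ψ' (-t) y) = (fun y => actF m K ψ t y) :=
      funext hact
    have hQfun : (fun y => (ψ' (-t) y).1) = (fun y => (ψ t y).1) :=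
      funext fun y => by rw [hψ't]
    obtain ⟨hdiff, hform⟩ := hrev
    rw [hfun] at hdiff
    refine ⟨hdiff, fun v => ?_⟩
    have := hform v
    rw [hfun, hQfun, hψ't] at this
    exact this
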